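/- arXiv:2507.21674 — 5 statements merged into one kernel-verified Lean document; each statement's English description precedes it below -/
import Mathlib

section
/- Let n ≥ 1, let J ∈ 𝕊, let a = (a₁,…,aₙ) ∈ ℂ_Jⁿ, and let P ∈ ℍ[q₁,…,qₙ]. Then P has a zero on the arranged spherical set 𝕊_a if and only if its regular conjugate P^c has a zero on 𝕊_a, and this happens if and only if the symmetrization P^s vanishes identically on 𝕊_a. -/
open scoped Quaternion

noncomputable section

/-- The quaternions. -/
abbrev ℍq : Type := Quaternion ℝ

/-- Slice regular polynomials in `n` quaternionic variables: formal polynomials with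
quaternionic coefficients written on the right, with the slice (convolution) product. -/
abbrev SP (n : ℕ) : Type := AddMonoidAlgebra ℍq (Fin n →₀ ℕ)

/-- Right ideals of `SP n`. -/
abbrev RIdeal (n : ℕ) := Submodule (SP n)ᵐᵒᵖ (SP n)

/-- Evaluation of a slice regular polynomial at a point of `ℍⁿ`:
`P(p) = ∑ p₁^{ℓ₁} ⋯ pₙ^{ℓₙ} a_{ℓ₁,…,ℓₙ}`. -/
def peval {n : ℕ} (p : Fin n → ℍq) (P : SP n) : ℍq :=
  Finsupp.sum P.coeff fun m a => (List.ofFn fun i => p i ^ m i).prod * a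

/-- The regular conjugate `P^c`. -/
def rconj {n : ℕ} (P : SP n) : SP n :=
  AddMonoidAlgebra.ofCoeff (Finsupp.mapRange (star : ℍq → ℍq) (star_zero _) P.coeff)

/-- The symmetrization `P^s = P * P^c`. -/
def symzn {n : ℕ} (P : SP n) : SP n := P * rconj P

/-- The sphere `𝕊` of quaternionic imaginary units. -/
def QSph : Set ℍq := {J | J ^ 2 = -1}

/-- The slice `ℂ_K = ℝ + ℝK`. -/
def CSlice (K : ℍq) : Set ℍq := {q | ∃ x y : ℝ, q = (x : ℍq) + (y : ℍq) * K}

/-- The points of `ℍⁿ` lying in some slice `ℂ_Kⁿ` (points with commuting components). -/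
def commSlice (n : ℕ) : Set (Fin n → ℍq) := {p | ∃ K ∈ QSph, ∀ i, p i ∈ CSlice K}

/-- The common zero set `V(I)` of a right ideal. -/
def Vq {n : ℕ} (I : RIdeal n) : Set (Fin n → ℍq) := {p | ∀ P ∈ I, peval p P = 0}

/-- `V_c(I) = V(I) ∩ ⋃_{K ∈ 𝕊} ℂ_Kⁿ`. -/
def Vc {n : ℕ} (I : RIdeal n) : Set (Fin n → ℍq) := Vq I ∩ commSlice n

/-- The spherical set `𝕊_a` of a point `a ∈ ℍⁿ`. -/
def SphSet {n : ℕ} (a : Fin n → ℍq) : Set (Fin n → ℍq) :=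
  {p | ∃ g : ℍq, g ≠ 0 ∧ ∀ i, p i = g⁻¹ * a i * g}

/-- The symmetrization `𝕊_Z = ⋃_{a ∈ Z} 𝕊_a` of a subset of `ℍⁿ`. -/
def SymmSet {n : ℕ} (Z : Set (Fin n → ℍq)) : Set (Fin n → ℍq) := ⋃ a ∈ Z, SphSet a

/-- `J(Z)`: the right ideal generated by the polynomials vanishing identically on `Z`. -/
def Jq {n : ℕ} (Z : Set (Fin n → ℍq)) : RIdeal n :=
  Submodule.span (SP n)ᵐᵒᵖ {P | ∀ p ∈ Z, peval p P = 0}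

/-- A right ideal is completely prime if `P*Q ∈ I` and `P*I ⊆ I` imply `P ∈ I` or `Q ∈ I`. -/
def CompletelyPrime {n : ℕ} (I : RIdeal n) : Prop :=
  ∀ P Q : SP n, P * Q ∈ I → (∀ R ∈ I, P * R ∈ I) → P ∈ I ∨ Q ∈ I

/-- The radical `√I`: the intersection of all completely prime right ideals containing `I`. -/
def radq {n : ℕ} (I : RIdeal n) : RIdeal n :=
  sInf {J : RIdeal n | CompletelyPrime J ∧ I ≤ J}

/-- A right ideal is quasi prime if `P*Q ∈ I` implies `P ∈ I` or `Q^s ∈ I`. -/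
def QuasiPrime {n : ℕ} (I : RIdeal n) : Prop :=
  ∀ P Q : SP n, P * Q ∈ I → P ∈ I ∨ symzn Q ∈ I

/-- A right ideal is two-sided if it is also closed under left multiplication. -/
def IsTwoSidedIdl {n : ℕ} (I : RIdeal n) : Prop :=
  ∀ P : SP n, ∀ Q ∈ I, P * Q ∈ I

/-- The symmetrized ideal `S(I)`: the right ideal generated by `{P^s : P ∈ I}`. -/
def SIdl {n : ℕ} (I : RIdeal n) : RIdeal n :=
  Submodule.span (SP n)ᵐᵒᵖ {Q | ∃ P ∈ I, Q = symzn P}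

/-- The product `I₁ * I₂`: the right ideal generated by `{P*Q : P ∈ I₁, Q ∈ I₂}`. -/
def prodIdl {n : ℕ} (I₁ I₂ : RIdeal n) : RIdeal n :=
  Submodule.span (SP n)ᵐᵒᵖ {x | ∃ P ∈ I₁, ∃ Q ∈ I₂, x = P * Q}

/-- Reducibility of the slice algebraic set `V_c(I)`. -/
def VcReducible {n : ℕ} (I : RIdeal n) : Prop :=
  ∃ I₁ I₂ : RIdeal n, I₁ ≠ ⊥ ∧ I₁ ≠ ⊤ ∧ I₂ ≠ ⊥ ∧ I₂ ≠ ⊤ ∧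
    ¬ I₁ ≤ I₂ ∧ ¬ I₂ ≤ I₁ ∧ Vc I = Vc I₁ ∪ Vc I₂

/-- Reducibility of the slice algebraic set `V(I)`. -/
def VReducible {n : ℕ} (I : RIdeal n) : Prop :=
  ∃ I₁ I₂ : RIdeal n, I₁ ≠ ⊥ ∧ I₁ ≠ ⊤ ∧ I₂ ≠ ⊥ ∧ I₂ ≠ ⊤ ∧
    ¬ I₁ ≤ I₂ ∧ ¬ I₂ ≤ I₁ ∧ Vq I = Vq I₁ ∪ Vq I₂

/-- An irreducible slice regular polynomial. -/
def IrredPoly {n : ℕ} (H : SP n) : Prop :=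
  H ≠ 0 ∧ ¬ IsUnit H ∧ ∀ P Q : SP n, H = P * Q → IsUnit P ∨ IsUnit Q

/-- The variable `q_i` as a slice regular polynomial. -/
def Xq {n : ℕ} (i : Fin n) : SP n := AddMonoidAlgebra.single (Finsupp.single i 1) 1

/-- A constant polynomial. -/
def Cq {n : ℕ} (a : ℍq) : SP n := AddMonoidAlgebra.single 0 a

/-- A polynomial has real coefficients. -/
def RealCoeffs {n : ℕ} (P : SP n) : Prop := ∀ m : Fin n →₀ ℕ, ∃ r : ℝ, P.coeff m = (r : ℍq)



namespace Stmt0Aux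

variable {n : ℕ}

def qi : ℍq := ⟨0,1,0,0⟩
def qj : ℍq := ⟨0,0,1,0⟩
def qk : ℍq := ⟨0,0,0,1⟩

lemma frame (c : ℍq) :
    qi * c * qi + qj * c * qj + qk * c * qk + star c + star c + c = 0 := by
  ext <;> simp only [Quaternion.re_mul, Quaternion.imI_mul, Quaternion.imJ_mul, Quaternion.imK_mul,
    Quaternion.re_add, Quaternion.imI_add, Quaternion.imJ_add, Quaternion.imK_add, Quaternion.re_star,
    Quaternion.imI_star, Quaternion.imJ_star, Quaternion.imK_star, Quaternion.re_zero,
    Quaternion.imI_zero, Quaternion.imJ_zero, Quaternion.imK_zero] <;> simp [qi, qj, qk]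

/-- The fundamental linear operator attached to a polynomial. -/
def ff (M : (Fin n →₀ ℕ) → ℍq) (P : SP n) (g : ℍq) : ℍq :=
  P.coeff.sum fun m c => M m * g * c

variable {M : (Fin n →₀ ℕ) → ℍq}

lemma ff_zero (g : ℍq) : ff M (0 : SP n) g = 0 := by simp [ff]

lemma ff_single (m : Fin n →₀ ℕ) (c g : ℍq) :
    ff M (AddMonoidAlgebra.single m c) g = M m * g * c := by
  simp [ff, AddMonoidAlgebra.coeff_single, Finsupp.sum_single_index]

lemma ff_add (P Q : SP n) (g : ℍq) : ff M (P + Q) g = ff M P g + ff M Q g :=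
  Finsupp.sum_add_index' (fun m => by simp) (fun m b₁ b₂ => by rw [mul_add])

lemma ff_g_zero (P : SP n) : ff M P 0 = 0 := by simp [ff]

lemma ff_g_add (P : SP n) (g h : ℍq) : ff M P (g + h) = ff M P g + ff M P h := by
  unfold ff
  rw [← Finsupp.sum_add]
  exact Finsupp.sum_congr fun m _ => by rw [mul_add, add_mul]

lemma ff_g_smul (P : SP n) (r : ℝ) (g : ℍq) : ff M P (r • g) = r • ff M P g := by
  unfold ff
  rw [Finsupp.smul_sum]
  exact Finsupp.sum_congr fun m _ => by
    rw [mul_smul_comm, smul_mul_assoc]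

lemma ff_rconj (P : SP n) (g : ℍq) :
    ff M (rconj P) g = P.coeff.sum fun m c => M m * g * star c :=
  Finsupp.sum_mapRange_index (hf := star_zero _) (fun m => by simp)

lemma rconj_rconj (P : SP n) : rconj (rconj P) = P :=
  AddMonoidAlgebra.ext <| Finsupp.ext fun m => by
  simp only [rconj, AddMonoidAlgebra.coeff_ofCoeff, Finsupp.mapRange_apply, star_star]

end Stmt0Aux

namespace Stmt0Aux
variable {n : ℕ} {M : (Fin n →₀ ℕ) → ℍq}

lemma ff_mul (hadd : ∀ k l, M (k + l) = M k * M l)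
    (hcomm : ∀ k l, Commute (M k) (M l)) (P Q : SP n) (g : ℍq) :
    ff M (P * Q) g = ff M Q (ff M P g) := by
  induction P using AddMonoidAlgebra.induction_linear with
  | zero => simp [ff_zero, ff_g_zero]
  | add P₁ P₂ h₁ h₂ => rw [add_mul, ff_add, ff_add, h₁, h₂, ff_g_add]
  | single k b =>
    induction Q using AddMonoidAlgebra.induction_linear with
    | zero => simp [ff_zero, ff_g_zero]
    | add Q₁ Q₂ h₁ h₂ => rw [mul_add, ff_add, ff_add, h₁, h₂]
    | single l c =>
      rw [AddMonoidAlgebra.single_mul_single, ff_single, ff_single, ff_single,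
        hadd k l, (hcomm k l).eq]
      simp only [mul_assoc]

lemma ff_frame (P : SP n) (g : ℍq) :
    ff M P (g * qi) * qi + ff M P (g * qj) * qj + ff M P (g * qk) * qk +
      ff M (rconj P) g + ff M (rconj P) g + ff M P g = 0 := by
  rw [ff_rconj]
  unfold ff
  rw [Finsupp.sum_mul, Finsupp.sum_mul, Finsupp.sum_mul, ← Finsupp.sum_add,
    ← Finsupp.sum_add, ← Finsupp.sum_add, ← Finsupp.sum_add, ← Finsupp.sum_add]
  rw [show (0:ℍq) = P.coeff.sum fun _ _ => (0:ℍq) from (Finsupp.sum_fun_zero P.coeff).symm]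
  refine Finsupp.sum_congr ?_
  intro m _
  set c := P.coeff m
  have h := frame c
  have expand : M m * (g * qi) * c * qi + M m * (g * qj) * c * qj + M m * (g * qk) * c * qk +
      M m * g * star c + M m * g * star c + M m * g * c
      = M m * (g * (qi * c * qi + qj * c * qj + qk * c * qk + star c + star c + c)) := by
    simp only [mul_add, mul_assoc]
  rw [expand, h, mul_zero, mul_zero]

end Stmt0Aux

namespace Stmt0Aux
variable {n : ℕ} {M : (Fin n →₀ ℕ) → ℍq}

lemma symzn_apply (P : SP n) (m : Fin n →₀ ℕ) :
    (P * rconj P).coeff m = P.coeff.sum fun k b => P.coeff.sum fun l c =>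
      if k + l = m then b * star c else 0 := by
  classical
  rw [AddMonoidAlgebra.coeff_mul]
  refine Finsupp.sum_congr fun k _ => ?_
  exact Finsupp.sum_mapRange_index (hf := star_zero _) (fun l => by simp)

lemma star_symzn (P : SP n) (m : Fin n →₀ ℕ) :
    star ((P * rconj P).coeff m) = (P * rconj P).coeff m := by
  classical
  rw [symzn_apply]
  simp only [Finsupp.sum, star_sum]
  rw [Finset.sum_comm]
  refine Finset.sum_congr rfl fun k _ => Finset.sum_congr rfl fun l _ => ?_
  rw [add_comm l k]
  split_ifs with hcond
  · rw [star_mul, star_star]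
  · exact star_zero _

lemma symzn_coeff_real (P : SP n) (m : Fin n →₀ ℕ) :
    ∃ r : ℝ, (P * rconj P).coeff m = (r : ℍq) := by
  refine ⟨((P * rconj P).coeff m).re, ?_⟩
  have h := Quaternion.self_add_star' ((P * rconj P).coeff m)
  rw [star_symzn] at h
  have h2 : (2:ℝ) • ((P * rconj P).coeff m) = (2:ℝ) • ((((P * rconj P).coeff m).re : ℝ) : ℍq) := by
    rw [two_smul, two_smul, h, ← Quaternion.coe_add, two_mul]
  exact smul_right_injective ℍq two_ne_zero h2

lemma ff_symzn (P : SP n) (g : ℍq) :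
    ff M (P * rconj P) g = ff M (P * rconj P) 1 * g := by
  unfold ff
  rw [Finsupp.sum_mul]
  refine Finsupp.sum_congr fun m _ => ?_
  obtain ⟨r, hr⟩ := symzn_coeff_real P m
  rw [hr, mul_one, mul_assoc, mul_assoc, Quaternion.coe_commutes]

end Stmt0Aux

namespace Stmt0Aux
variable {n : ℕ} {M : (Fin n →₀ ℕ) → ℍq}

/-- `ff M P` as an `ℝ`-linear map. -/
def ffL (M : (Fin n →₀ ℕ) → ℍq) (P : SP n) : ℍq →ₗ[ℝ] ℍq where
  toFun := ff M P
  map_add' := ff_g_add P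
  map_smul' := ff_g_smul P

lemma surj_of (P : SP n) (hno : ∀ g : ℍq, g ≠ 0 → ff M P g ≠ 0) :
    Function.Surjective (ff M P) := by
  have hinj : Function.Injective (ffL M P) :=
    (injective_iff_map_eq_zero (ffL M P)).mpr
      (fun g hg => by_contra fun h0 => hno g h0 hg)
  exact LinearMap.injective_iff_surjective.mp hinj

lemma core1 (hadd : ∀ k l, M (k + l) = M k * M l)
    (hcomm : ∀ k l, Commute (M k) (M l)) (P : SP n) :
    (∃ g : ℍq, g ≠ 0 ∧ ff M P g = 0) ↔ ff M (P * rconj P) 1 = 0 := by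
  constructor
  · rintro ⟨g, hg, hA⟩
    have h1 : ff M (P * rconj P) g = 0 := by
      rw [ff_mul hadd hcomm, hA, ff_g_zero]
    rw [ff_symzn] at h1
    rcases mul_eq_zero.mp h1 with h | h
    · exact h
    · exact absurd h hg
  · intro hw
    by_contra hno
    push_neg at hno
    have hsurj := surj_of P hno
    have hB0 : ∀ h : ℍq, ff M (rconj P) h = 0 := by
      intro h
      obtain ⟨g, rfl⟩ := hsurj h
      rw [← ff_mul hadd hcomm, ff_symzn, hw, zero_mul]
    have hA0 : ∀ g : ℍq, ff M P g = 0 := by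
      intro g
      have h := ff_frame (M := M) (rconj P) g
      rw [rconj_rconj] at h
      simp only [hB0, zero_mul, zero_add, add_zero] at h
      have h2 : (2:ℝ) • ff M P g = (2:ℝ) • (0:ℍq) := by
        rw [two_smul, h, smul_zero]
      exact smul_right_injective ℍq two_ne_zero h2
    exact hno 1 one_ne_zero (hA0 1)

lemma core2 (hadd : ∀ k l, M (k + l) = M k * M l)
    (hcomm : ∀ k l, Commute (M k) (M l)) (P : SP n)
    (hEA : ∃ g : ℍq, g ≠ 0 ∧ ff M P g = 0) :
    ∃ g : ℍq, g ≠ 0 ∧ ff M (rconj P) g = 0 := by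
  obtain ⟨g, hg, hA⟩ := hEA
  by_contra hno
  push_neg at hno
  have hsurj := surj_of (rconj P) hno
  obtain ⟨h, hh⟩ := hsurj g
  have hh0 : h ≠ 0 := by
    rintro rfl
    rw [ff_g_zero] at hh
    exact hg hh.symm
  have h1 : ff M (rconj P * P) h = 0 := by
    rw [ff_mul hadd hcomm, hh, hA]
  have h2 : ff M (rconj P * rconj (rconj P)) h = 0 := by
    rw [rconj_rconj]; exact h1
  rw [ff_symzn] at h2
  have hw : ff M (rconj P * rconj (rconj P)) 1 = 0 := by
    rcases mul_eq_zero.mp h2 with h' | h'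
    · exact h'
    · exact absurd h' hh0
  obtain ⟨g', hg', hB⟩ := (core1 hadd hcomm (rconj P)).mpr hw
  exact hno g' hg' hB

end Stmt0Aux



namespace Stmt0Aux
variable {n : ℕ}

lemma conj_pow (g x : ℍq) (hg : g ≠ 0) (t : ℕ) :
    (g⁻¹ * x * g) ^ t = g⁻¹ * x ^ t * g := by
  induction t with
  | zero => rw [pow_zero, pow_zero, mul_one, inv_mul_cancel₀ hg]
  | succ t ih =>
    rw [pow_succ, pow_succ, ih]
    have hgx : g * (g⁻¹ * x * g) = x * g := by
      rw [← mul_assoc, ← mul_assoc, mul_inv_cancel₀ hg, one_mul]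
    calc (g⁻¹ * x ^ t * g) * (g⁻¹ * x * g)
        = g⁻¹ * x ^ t * (g * (g⁻¹ * x * g)) := by simp only [mul_assoc]
      _ = g⁻¹ * x ^ t * (x * g) := by rw [hgx]
      _ = g⁻¹ * (x ^ t * x) * g := by simp only [mul_assoc]

lemma map_conj_prod (g : ℍq) (hg : g ≠ 0) (L : List ℍq) :
    (L.map fun x => g⁻¹ * x * g).prod = g⁻¹ * L.prod * g := by
  induction L with
  | nil => simp [inv_mul_cancel₀ hg]
  | cons x L ih =>
    rw [List.map_cons, List.prod_cons, List.prod_cons, ih]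
    have hgg : g * (g⁻¹ * L.prod * g) = L.prod * g := by
      rw [← mul_assoc, ← mul_assoc, mul_inv_cancel₀ hg, one_mul]
    calc (g⁻¹ * x * g) * (g⁻¹ * L.prod * g)
        = g⁻¹ * x * (g * (g⁻¹ * L.prod * g)) := by simp only [mul_assoc]
      _ = g⁻¹ * x * (L.prod * g) := by rw [hgg]
      _ = g⁻¹ * (x * L.prod) * g := by simp only [mul_assoc]

/-- The monomial evaluation function. -/
def Ma (a : Fin n → ℍq) : (Fin n →₀ ℕ) → ℍq :=
  fun m => (List.ofFn fun i => a i ^ m i).prod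

lemma peval_conj (a : Fin n → ℍq) (g : ℍq) (hg : g ≠ 0) (P : SP n) :
    peval (fun i => g⁻¹ * a i * g) P = g⁻¹ * ff (Ma a) P g := by
  unfold peval ff
  rw [Finsupp.mul_sum]
  refine Finsupp.sum_congr fun m _ => ?_
  have h1 : (List.ofFn fun i => (g⁻¹ * a i * g) ^ m i)
      = (List.ofFn fun i => a i ^ m i).map fun x => g⁻¹ * x * g := by
    rw [List.map_ofFn]
    exact congrArg List.ofFn (funext fun i => conj_pow g (a i) hg (m i))
  rw [h1, map_conj_prod g hg]
  show g⁻¹ * Ma a m * g * P.coeff m = g⁻¹ * (Ma a m * g * P.coeff m)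
  simp only [mul_assoc]

lemma ofFn_prod_mul : ∀ {m : ℕ} (f g : Fin m → ℍq), (∀ i j, Commute (f i) (g j)) →
    (List.ofFn fun i => f i * g i).prod = (List.ofFn f).prod * (List.ofFn g).prod := by
  intro m
  induction m with
  | zero => intro f g _; simp
  | succ m ih =>
    intro f g h
    rw [List.ofFn_succ, List.ofFn_succ, List.ofFn_succ, List.prod_cons, List.prod_cons,
      List.prod_cons, ih _ _ (fun i j => h i.succ j.succ)]
    have hg0 : Commute (g 0) ((List.ofFn fun i : Fin m => f i.succ).prod) := by
      refine Commute.list_prod_right _ _ ?_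
      intro x hx
      obtain ⟨i, hi⟩ := List.mem_ofFn.mp hx
      rw [← hi]
      exact (h i.succ 0).symm
    exact hg0.mul_mul_mul_comm (f 0) _

lemma Ma_add (a : Fin n → ℍq) (hc : ∀ i j, Commute (a i) (a j)) (k l : Fin n →₀ ℕ) :
    Ma a (k + l) = Ma a k * Ma a l := by
  unfold Ma
  rw [← ofFn_prod_mul _ _ (fun i j => (hc i j).pow_pow _ _)]
  have he : (fun i => a i ^ (k + l) i) = fun i => a i ^ k i * a i ^ l i :=
    funext fun i => by rw [Finsupp.add_apply, pow_add]
  rw [he]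

lemma Ma_comm (a : Fin n → ℍq) (hc : ∀ i j, Commute (a i) (a j)) (k l : Fin n →₀ ℕ) :
    Commute (Ma a k) (Ma a l) := by
  refine Commute.list_prod_right _ _ ?_
  intro x hx
  obtain ⟨j, hj⟩ := List.mem_ofFn.mp hx
  rw [← hj]
  refine Commute.list_prod_left _ _ ?_
  intro y hy
  obtain ⟨i, hi⟩ := List.mem_ofFn.mp hy
  rw [← hi]
  exact (hc i j).pow_pow _ _

end Stmt0Aux

/-- For `a ∈ ℂ_Jⁿ`, `P` has a zero on the arranged spherical set `𝕊_a`
iff `P^c` has a zero on `𝕊_a`, iff `P^s` vanishes identically on `𝕊_a`. -/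
theorem stmt0 {n : ℕ} (hn : 1 ≤ n) (J : ℍq) (hJ : J ∈ QSph)
    (a : Fin n → ℍq) (ha : ∀ i, a i ∈ CSlice J) (P : SP n) :
    ((∃ p ∈ SphSet a, peval p P = 0) ↔ (∃ p ∈ SphSet a, peval p (rconj P) = 0)) ∧
    ((∃ p ∈ SphSet a, peval p P = 0) ↔ (∀ p ∈ SphSet a, peval p (symzn P) = 0)) := by
  classical
  have hac : ∀ i j, Commute (a i) (a j) := by
    intro i j
    obtain ⟨x, y, hx⟩ := ha i
    obtain ⟨u, v, hu⟩ := ha j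
    rw [hx, hu]
    have hJ : ∀ (p q : ℝ), Commute ((p : ℍq) + (q : ℍq) * J) J :=
      fun p q => (Quaternion.coe_commute p J).add_left
        ((Quaternion.coe_commute q J).mul_left (Commute.refl J))
    exact (Quaternion.coe_commute u _).symm.add_right
      ((Quaternion.coe_commute v _).symm.mul_right (hJ x y))
  have hadd := Stmt0Aux.Ma_add a hac
  have hcomm := Stmt0Aux.Ma_comm a hac
  have hmem : ∀ g : ℍq, g ≠ 0 → (fun i => g⁻¹ * a i * g) ∈ SphSet a :=
    fun g hg => ⟨g, hg, fun i => rfl⟩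
  have hEx : ∀ Q : SP n, (∃ p ∈ SphSet a, peval p Q = 0) ↔
      (∃ g : ℍq, g ≠ 0 ∧ Stmt0Aux.ff (Stmt0Aux.Ma a) Q g = 0) := by
    intro Q
    constructor
    · rintro ⟨p, ⟨g, hg, hp⟩, h0⟩
      refine ⟨g, hg, ?_⟩
      have hpe : p = fun i => g⁻¹ * a i * g := funext hp
      rw [hpe, Stmt0Aux.peval_conj a g hg] at h0
      rcases mul_eq_zero.mp h0 with h | h
      · exact absurd h (inv_ne_zero hg)
      · exact h
    · rintro ⟨g, hg, h0⟩
      exact ⟨_, hmem g hg, by rw [Stmt0Aux.peval_conj a g hg, h0, mul_zero]⟩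
  have hS : (∀ p ∈ SphSet a, peval p (symzn P) = 0) ↔
      Stmt0Aux.ff (Stmt0Aux.Ma a) (P * rconj P) 1 = 0 := by
    constructor
    · intro h
      have h1 := h _ (hmem 1 one_ne_zero)
      rw [Stmt0Aux.peval_conj a 1 one_ne_zero, inv_one, one_mul] at h1
      exact h1
    · intro hw p hp
      obtain ⟨g, hg, hp⟩ := hp
      have hpe : p = fun i => g⁻¹ * a i * g := funext hp
      rw [hpe, Stmt0Aux.peval_conj a g hg]
      have h2 : Stmt0Aux.ff (Stmt0Aux.Ma a) (symzn P) g = 0 := by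
        show Stmt0Aux.ff (Stmt0Aux.Ma a) (P * rconj P) g = 0
        rw [Stmt0Aux.ff_symzn, hw, zero_mul]
      rw [h2, mul_zero]
  refine ⟨?_, ?_⟩
  · rw [hEx P, hEx (rconj P)]
    constructor
    · exact Stmt0Aux.core2 hadd hcomm P
    · intro h
      have h2 := Stmt0Aux.core2 hadd hcomm (rconj P) h
      rwa [Stmt0Aux.rconj_rconj] at h2
  · rw [hEx P, hS]
    exact Stmt0Aux.core1 hadd hcomm P

end
end

section
/- Let I be a two-sided ideal of ℍ[q₁,…,qₙ]. Then V_c(I) has spherical symmetry, i.e. V_c(I) = 𝕊_{V_c(I)}. -/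
open scoped Quaternion

noncomputable section

lemma qconj_pow (g x : ℍq) (hg : g ≠ 0) (k : ℕ) :
    (g⁻¹ * x * g) ^ k = g⁻¹ * x ^ k * g := by
  induction k with
  | zero => simp [inv_mul_cancel₀ hg]
  | succ k ih =>
      rw [pow_succ, ih, pow_succ]
      simp [mul_assoc, mul_inv_cancel_left₀ hg]

lemma qconj_list_prod (g : ℍq) (hg : g ≠ 0) (l : List ℍq) :
    (l.map fun x => g⁻¹ * x * g).prod = g⁻¹ * l.prod * g := by
  induction l with
  | nil => simp [inv_mul_cancel₀ hg]
  | cons a t ih =>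
      simp only [List.map_cons, List.prod_cons, ih]
      simp [mul_assoc, mul_inv_cancel_left₀ hg]

lemma conj_peval {n : ℕ} (a : Fin n → ℍq) (g : ℍq) (hg : g ≠ 0) (P : SP n) :
    peval (fun i => g⁻¹ * a i * g) P
      = g⁻¹ * peval a (Cq g * P * Cq g⁻¹) * g := by
  have hQ : (Cq g * P * Cq g⁻¹ : SP n)
      = AddMonoidAlgebra.ofCoeff
          (Finsupp.mapRange (fun b => g * b * g⁻¹) (by simp) P.coeff) := by
    refine AddMonoidAlgebra.ext (Finsupp.ext fun m => ?_)
    simp [Cq, AddMonoidAlgebra.coeff_single_zero_mul,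
      AddMonoidAlgebra.coeff_mul_single_zero, Finsupp.mapRange_apply, mul_assoc]
  rw [hQ]
  unfold peval
  rw [AddMonoidAlgebra.coeff_ofCoeff]
  rw [Finsupp.sum_mapRange_index (by intro m; simp)]
  rw [Finsupp.mul_sum, Finsupp.sum_mul]
  refine Finsupp.sum_congr fun m _ => ?_
  have hM : (List.ofFn fun i => (g⁻¹ * a i * g) ^ m i).prod
      = g⁻¹ * (List.ofFn fun i => a i ^ m i).prod * g := by
    rw [← qconj_list_prod g hg, List.map_ofFn]
    exact congrArg List.prod
      (congrArg List.ofFn (funext fun i => qconj_pow g (a i) hg (m i)))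
  rw [hM]
  simp [mul_assoc, inv_mul_cancel₀ hg, mul_inv_cancel_left₀ hg]

/-- If `I` is a two-sided ideal then `V_c(I)` has spherical symmetry. -/
theorem stmt3 {n : ℕ} (I : RIdeal n) (hI : IsTwoSidedIdl I) :
    Vc I = SymmSet (Vc I) := by
  ext p
  constructor
  · intro hp
    refine Set.mem_biUnion hp ⟨1, one_ne_zero, fun i => by simp⟩
  · intro hp
    obtain ⟨a, ha, g, hg, hpg⟩ := by
      simpa [SymmSet, SphSet] using hp
    obtain ⟨haV, K, hK, haK⟩ := ha
    have hpfun : p = fun i => g⁻¹ * a i * g := funext hpg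
    constructor
    · -- p ∈ Vq I
      intro P hP
      have hmem : (Cq g * P * Cq g⁻¹ : SP n) ∈ I := by
        have h1 : (Cq g * P : SP n) ∈ I := hI _ _ hP
        have h2 := Submodule.smul_mem I (MulOpposite.op (Cq g⁻¹ : SP n)) h1
        simpa [op_smul_eq_mul, mul_assoc] using h2
      rw [hpfun, conj_peval a g hg P, haV _ hmem]
      simp
    · -- p lies in a slice
      refine ⟨g⁻¹ * K * g, ?_, fun i => ?_⟩
      · show (g⁻¹ * K * g) ^ 2 = -1
        rw [qconj_pow g K hg 2, hK]
        simp [mul_assoc, inv_mul_cancel₀ hg]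
      · obtain ⟨x, y, hxy⟩ := haK i
        refine ⟨x, y, ?_⟩
        rw [hpg i, hxy, mul_add, add_mul]
        congr 1
        · rw [← Quaternion.coe_commutes x g⁻¹, mul_assoc, inv_mul_cancel₀ hg,
            mul_one]
        · rw [← mul_assoc g⁻¹ (↑y) K, ← Quaternion.coe_commutes y g⁻¹]
          simp [mul_assoc]

end
end

section
/- Let I₁, I₂ be right ideals of ℍ[q₁,…,qₙ] such that I₂ is generated by finitely many polynomials G₁,…,G_m all of whose coefficients are real. Then V_c(I₁ ∩ I₂) = V_c(I₁ * I₂) = V_c(I₁) ∪ V_c(I₂). -/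
open scoped Quaternion

noncomputable section

namespace Stmt5Aux

open Finsupp MulOpposite

variable {n : ℕ}

/-- The monomial value `p^m`. -/
def Pm (p : Fin n → ℍq) (m : Fin n →₀ ℕ) : ℍq := (List.ofFn fun i => p i ^ m i).prod

lemma peval_def (p : Fin n → ℍq) (P : SP n) :
    peval p P = Finsupp.sum P.coeff fun m a => Pm p m * a := rfl

lemma peval_single (p : Fin n → ℍq) (m : Fin n →₀ ℕ) (a : ℍq) :
    peval p (AddMonoidAlgebra.single m a) = Pm p m * a := by
  unfold peval
  rw [AddMonoidAlgebra.coeff_single]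
  exact Finsupp.sum_single_index (by simp)

/-- `peval p` as an additive monoid hom. -/
def pevalAdd (p : Fin n → ℍq) : SP n →+ ℍq where
  toFun := peval p
  map_zero' := by unfold peval; exact Finsupp.sum_zero_index
  map_add' P Q := by
    unfold peval
    rw [AddMonoidAlgebra.coeff_add]
    exact Finsupp.sum_add_index' (fun _ => mul_zero _) (fun _ b₁ b₂ => mul_add _ _ _)

lemma peval_finsuppSum {β M : Type} [Zero M] (p : Fin n → ℍq) (S : β →₀ M)
    (h : β → M → SP n) :
    peval p (S.sum h) = S.sum fun a b => peval p (h a b) :=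
  map_finsuppSum (pevalAdd p) S h

lemma sp_single_mul_single (k l : Fin n →₀ ℕ) (a b : ℍq) :
    (AddMonoidAlgebra.single k a : SP n) * AddMonoidAlgebra.single l b
      = AddMonoidAlgebra.single (k + l) (a * b) :=
  AddMonoidAlgebra.single_mul_single ..

lemma sp_eq_sum_single (P : SP n) :
    P = P.coeff.sum (fun k a => (AddMonoidAlgebra.single k a : SP n)) :=
  (AddMonoidAlgebra.sum_coeff_single P).symm

lemma ofFn_prod_mul : ∀ (k : ℕ) (f g : Fin k → ℍq), (∀ i j, Commute (g i) (f j)) →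
    (List.ofFn fun i => f i * g i).prod = (List.ofFn f).prod * (List.ofFn g).prod := by
  intro k
  induction k with
  | zero => simp
  | succ k ih =>
    intro f g h
    rw [List.ofFn_succ, List.ofFn_succ (f := f), List.ofFn_succ (f := g)]
    simp only [List.prod_cons]
    rw [ih (fun i => f i.succ) (fun i => g i.succ) (fun i j => h _ _)]
    have hc : Commute (g 0) (List.ofFn fun i => f i.succ).prod := by
      apply Commute.list_prod_right
      intro x hx
      rw [List.mem_ofFn] at hx
      obtain ⟨i, rfl⟩ := hx
      exact h 0 _
    rw [mul_assoc, ← mul_assoc (g 0), hc.eq, mul_assoc, mul_assoc]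

lemma Pm_add {p : Fin n → ℍq} (hc : ∀ i j, Commute (p i) (p j)) (k l : Fin n →₀ ℕ) :
    Pm p (k + l) = Pm p k * Pm p l := by
  unfold Pm
  have h : (fun i => p i ^ (k + l) i) = fun i => p i ^ k i * p i ^ l i := by
    funext i; rw [Finsupp.add_apply, pow_add]
  rw [h]
  exact ofFn_prod_mul n _ _ fun i j => (hc _ _).pow_pow _ _

lemma Pm_comm {p : Fin n → ℍq} (hc : ∀ i j, Commute (p i) (p j)) (k l : Fin n →₀ ℕ) :
    Pm p k * Pm p l = Pm p l * Pm p k := by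
  rw [← Pm_add hc, ← Pm_add hc, add_comm]

lemma peval_mul_single_right {p : Fin n → ℍq} (hc : ∀ i j, Commute (p i) (p j))
    (P : SP n) (l : Fin n →₀ ℕ) (r : ℝ) :
    peval p (P * AddMonoidAlgebra.single l (r : ℍq)) =
      peval p (AddMonoidAlgebra.single l (r : ℍq)) * peval p P := by
  conv_lhs => rw [sp_eq_sum_single P, Finsupp.sum_mul]
  rw [peval_finsuppSum]
  conv_rhs => rw [peval_def p P, Finsupp.mul_sum]
  apply Finsupp.sum_congr
  intro k _
  rw [sp_single_mul_single, peval_single, peval_single, Pm_add hc]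
  calc Pm p k * Pm p l * (P.coeff k * (r : ℍq))
      = Pm p k * Pm p l * ((r : ℍq) * P.coeff k) := by rw [Quaternion.coe_commutes]
    _ = Pm p l * Pm p k * ((r : ℍq) * P.coeff k) := by rw [Pm_comm hc]
    _ = Pm p l * (Pm p k * (r : ℍq)) * P.coeff k := by rw [mul_assoc, mul_assoc, mul_assoc]
    _ = Pm p l * ((r : ℍq) * Pm p k) * P.coeff k := by rw [Quaternion.coe_commutes]
    _ = Pm p l * (r : ℍq) * (Pm p k * P.coeff k) := by rw [mul_assoc, mul_assoc, mul_assoc]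

lemma peval_single_mul_left {p : Fin n → ℍq} (hc : ∀ i j, Commute (p i) (p j))
    (k : Fin n →₀ ℕ) (r : ℝ) (R : SP n) :
    peval p (AddMonoidAlgebra.single k (r : ℍq) * R) =
      peval p (AddMonoidAlgebra.single k (r : ℍq)) * peval p R := by
  conv_lhs => rw [sp_eq_sum_single R, Finsupp.mul_sum]
  rw [peval_finsuppSum]
  conv_rhs => rw [peval_def p R, Finsupp.mul_sum]
  apply Finsupp.sum_congr
  intro l _
  rw [sp_single_mul_single, peval_single, peval_single, Pm_add hc]
  calc Pm p k * Pm p l * ((r : ℍq) * R.coeff l)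
      = Pm p k * (Pm p l * (r : ℍq)) * R.coeff l := by rw [mul_assoc, mul_assoc, mul_assoc]
    _ = Pm p k * ((r : ℍq) * Pm p l) * R.coeff l := by rw [Quaternion.coe_commutes]
    _ = Pm p k * (r : ℍq) * (Pm p l * R.coeff l) := by rw [mul_assoc, mul_assoc, mul_assoc]

lemma single_real_comm (m : Fin n →₀ ℕ) (r : ℝ) (P : SP n) :
    (AddMonoidAlgebra.single m (r : ℍq) : SP n) * P
      = P * AddMonoidAlgebra.single m (r : ℍq) := by
  conv_lhs => rw [sp_eq_sum_single P, Finsupp.mul_sum]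
  conv_rhs => rw [sp_eq_sum_single P, Finsupp.sum_mul]
  apply Finsupp.sum_congr
  intro l _
  rw [sp_single_mul_single, sp_single_mul_single, add_comm, Quaternion.coe_commutes]

/-- Real-coefficient polynomials are central. -/
lemma realCoeffs_comm {G : SP n} (hG : RealCoeffs G) (P : SP n) : G * P = P * G := by
  conv_lhs => rw [sp_eq_sum_single G, Finsupp.sum_mul]
  conv_rhs => rw [sp_eq_sum_single G, Finsupp.mul_sum]
  apply Finsupp.sum_congr
  intro m _
  obtain ⟨r, hr⟩ := hG m
  rw [hr]
  exact single_real_comm m r P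

lemma peval_mul_real {p : Fin n → ℍq} (hc : ∀ i j, Commute (p i) (p j))
    {G : SP n} (hG : RealCoeffs G) (P : SP n) :
    peval p (P * G) = peval p G * peval p P := by
  conv_lhs => rw [sp_eq_sum_single G, Finsupp.mul_sum]
  rw [peval_finsuppSum]
  conv_rhs => rw [peval_def p G, Finsupp.sum_mul]
  apply Finsupp.sum_congr
  intro m _
  obtain ⟨r, hr⟩ := hG m
  rw [hr, peval_mul_single_right hc, peval_single]

lemma peval_real_mul {p : Fin n → ℍq} (hc : ∀ i j, Commute (p i) (p j))
    {G : SP n} (hG : RealCoeffs G) (R : SP n) :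
    peval p (G * R) = peval p G * peval p R := by
  conv_lhs => rw [sp_eq_sum_single G, Finsupp.sum_mul]
  rw [peval_finsuppSum]
  conv_rhs => rw [peval_def p G, Finsupp.sum_mul]
  apply Finsupp.sum_congr
  intro m _
  obtain ⟨r, hr⟩ := hG m
  rw [hr, peval_single_mul_left hc, peval_single]

lemma commSlice_commute {p : Fin n → ℍq} (hp : p ∈ commSlice n) :
    ∀ i j, Commute (p i) (p j) := by
  obtain ⟨K, _, hK⟩ := hp
  intro i j
  obtain ⟨x, y, hxy⟩ := hK i
  obtain ⟨x', y', hxy'⟩ := hK j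
  rw [hxy, hxy']
  have h1 : ∀ (r : ℝ) (q : ℍq), Commute (r : ℍq) q := fun r q => Quaternion.coe_commute r q
  apply Commute.add_left (h1 x _)
  apply Commute.add_right (h1 x' _).symm
  exact (h1 y _).mul_left (((h1 y' K).symm).mul_right (Commute.refl K))

end Stmt5Aux

/-- If `I₂` is generated by finitely many polynomials with real coefficients,
then `V_c(I₁ ∩ I₂) = V_c(I₁ * I₂) = V_c(I₁) ∪ V_c(I₂)`. -/
theorem stmt5 {n m : ℕ} (I₁ I₂ : RIdeal n) (G : Fin m → SP n)
    (hG : ∀ j, RealCoeffs (G j))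
    (hI₂ : I₂ = Submodule.span (SP n)ᵐᵒᵖ (Set.range G)) :
    Vc (I₁ ⊓ I₂) = Vc (prodIdl I₁ I₂) ∧ Vc (prodIdl I₁ I₂) = Vc I₁ ∪ Vc I₂ := by
  classical
  -- membership in I₂ via finite combinations
  have hmem : ∀ Q : SP n, Q ∈ I₂ ↔ ∃ c : Fin m → (SP n)ᵐᵒᵖ, ∑ j, c j • G j = Q := by
    intro Q
    rw [hI₂]
    exact Submodule.mem_span_range_iff_exists_fun _
  -- I₂ closed under left multiplication
  have hleft : ∀ (P : SP n) {Q : SP n}, Q ∈ I₂ → P * Q ∈ I₂ := by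
    intro P Q hQ
    obtain ⟨c, hc⟩ := (hmem Q).1 hQ
    apply (hmem _).2
    refine ⟨fun j => MulOpposite.op (P * (c j).unop), ?_⟩
    rw [← hc, Finset.mul_sum]
    apply Finset.sum_congr rfl
    intro j _
    show G j * (P * (c j).unop) = P * (c j • G j)
    show G j * (P * (c j).unop) = P * (G j * (c j).unop)
    rw [← mul_assoc, ← mul_assoc, Stmt5Aux.realCoeffs_comm (hG j) P]
  -- prodIdl ≤ I₁ ⊓ I₂
  have hprod_le : prodIdl I₁ I₂ ≤ I₁ ⊓ I₂ := by
    rw [prodIdl, Submodule.span_le]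
    rintro x ⟨P, hP, Q, hQ, rfl⟩
    constructor
    · exact I₁.smul_mem (MulOpposite.op Q) hP
    · exact hleft P hQ
  -- G j vanishing implies all of I₂ vanishes (on commuting-slice points)
  have hI₂van : ∀ p ∈ commSlice n, (∀ j, peval p (G j) = 0) → ∀ Q ∈ I₂, peval p Q = 0 := by
    intro p hp hz Q hQ
    obtain ⟨c, hc⟩ := (hmem Q).1 hQ
    have hms : peval p (∑ j, c j • G j) = ∑ j, peval p (c j • G j) :=
      map_sum (Stmt5Aux.pevalAdd p) _ _
    rw [← hc, hms]
    apply Finset.sum_eq_zero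
    intro j _
    show peval p (c j • G j) = 0
    show peval p (G j * (c j).unop) = 0
    rw [Stmt5Aux.peval_real_mul (Stmt5Aux.commSlice_commute hp) (hG j), hz j, zero_mul]
  -- V_c(prod) ⊆ V_c(I₁) ∪ V_c(I₂)
  have h3 : Vc (prodIdl I₁ I₂) ⊆ Vc I₁ ∪ Vc I₂ := by
    rintro p ⟨hz, hcs⟩
    by_cases hall : ∀ j, peval p (G j) = 0
    · exact Or.inr ⟨fun Q hQ => hI₂van p hcs hall Q hQ, hcs⟩
    · push_neg at hall
      obtain ⟨j, hj⟩ := hall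
      left
      refine ⟨fun P hP => ?_, hcs⟩
      have hGj : G j ∈ I₂ := by
        rw [hI₂]; exact Submodule.subset_span (Set.mem_range_self j)
      have hPG : P * G j ∈ prodIdl I₁ I₂ :=
        Submodule.subset_span ⟨P, hP, G j, hGj, rfl⟩
      have h0 := hz _ hPG
      rw [Stmt5Aux.peval_mul_real (Stmt5Aux.commSlice_commute hcs) (hG j)] at h0
      rcases mul_eq_zero.1 h0 with h | h
      · exact absurd h hj
      · exact h
  -- V_c(I₁) ∪ V_c(I₂) ⊆ V_c(I₁ ⊓ I₂)
  have h4 : Vc I₁ ∪ Vc I₂ ⊆ Vc (I₁ ⊓ I₂) := by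
    rintro p (⟨hz, hcs⟩ | ⟨hz, hcs⟩)
    · exact ⟨fun P hP => hz P hP.1, hcs⟩
    · exact ⟨fun P hP => hz P hP.2, hcs⟩
  -- V_c(I₁ ⊓ I₂) ⊆ V_c(prod)
  have h2 : Vc (I₁ ⊓ I₂) ⊆ Vc (prodIdl I₁ I₂) := by
    rintro p ⟨hz, hcs⟩
    exact ⟨fun P hP => hz P (hprod_le hP), hcs⟩
  exact ⟨Set.Subset.antisymm h2 (h3.trans h4), Set.Subset.antisymm h3 (h4.trans h2)⟩

end
end

section
/- If I is a completely prime right ideal of ℍ[q₁,…,qₙ], then I is a quasi prime right ideal. -/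
open scoped Quaternion

noncomputable section

lemma rconj_apply {n : ℕ} (P : SP n) (m : Fin n →₀ ℕ) : (rconj P).coeff m = star (P.coeff m) := by
  simp [rconj]

lemma rconj_single {n : ℕ} (m : Fin n →₀ ℕ) (a : ℍq) :
    rconj (AddMonoidAlgebra.single m a) = AddMonoidAlgebra.single m (star a) :=
  AddMonoidAlgebra.ext (Finsupp.mapRange_single (hf := star_zero _))

lemma rconj_add {n : ℕ} (P Q : SP n) : rconj (P + Q) = rconj P + rconj Q :=
  AddMonoidAlgebra.ext (Finsupp.mapRange_add (hf := star_zero _) (fun _ _ => star_add _ _) P.coeff Q.coeff)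

lemma rconj_zero {n : ℕ} : rconj (0 : SP n) = 0 :=
  AddMonoidAlgebra.ext (Finsupp.ext fun m => by rw [rconj_apply]; simp)

lemma rconj_single' {n : ℕ} (m : Fin n →₀ ℕ) (a : ℍq) :
    rconj (AddMonoidAlgebra.ofCoeff (Finsupp.single m a) : SP n) =
      AddMonoidAlgebra.ofCoeff (Finsupp.single m (star a)) :=
  AddMonoidAlgebra.ext (Finsupp.mapRange_single (hf := star_zero _))

lemma rconj_single_mul {n : ℕ} (m : Fin n →₀ ℕ) (a : ℍq) (Q : SP n) :
    rconj (AddMonoidAlgebra.single m a * Q) = rconj Q * rconj (AddMonoidAlgebra.single m a) := by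
  induction Q using AddMonoidAlgebra.induction with
  | zero => simp [rconj_zero]
  | single_add m' a' g _ _ ih =>
    rw [mul_add, rconj_add, rconj_add, add_mul, ih]
    rw [AddMonoidAlgebra.single_mul_single, rconj_single, rconj_single, rconj_single,
      AddMonoidAlgebra.single_mul_single, star_mul, add_comm m' m]

lemma rconj_mul {n : ℕ} (P Q : SP n) : rconj (P * Q) = rconj Q * rconj P := by
  induction P using AddMonoidAlgebra.induction with
  | zero => simp [rconj_zero]
  | single_add m a f _ _ ih =>
    rw [add_mul, rconj_add, rconj_add, mul_add, ih, rconj_single_mul]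

lemma rconj_rconj {n : ℕ} (P : SP n) : rconj (rconj P) = P :=
  AddMonoidAlgebra.ext (Finsupp.ext fun m => by rw [rconj_apply, rconj_apply, star_star])

lemma rconj_symzn {n : ℕ} (Q : SP n) : rconj (symzn Q) = symzn Q := by
  rw [symzn, rconj_mul, rconj_rconj]

lemma comm_of_selfconj {n : ℕ} (S R : SP n) (hS : rconj S = S) : S * R = R * S := by
  have key : ∀ m (a : ℍq), star a = a →
      AddMonoidAlgebra.single m a * R = R * AddMonoidAlgebra.single m a := by
    intro m a ha
    induction R using AddMonoidAlgebra.induction with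
    | zero => simp
    | single_add m' a' g _ _ ih =>
      rw [mul_add, add_mul, ih]
      congr 1
      rw [AddMonoidAlgebra.single_mul_single, AddMonoidAlgebra.single_mul_single, add_comm]
      congr 1
      have h' : a = ((a.re : ℝ) : ℍq) := Quaternion.star_eq_self.mp ha
      rw [h', Quaternion.coe_commutes]
  induction S using AddMonoidAlgebra.induction with
  | zero => simp
  | single_add m a f hf ha0 ih =>
    have hsm : star a = a := by
      have h0 : f.coeff m = 0 := Finsupp.notMem_support_iff.mp hf
      have h1 := congrArg (fun P : SP n => P.coeff m) hS
      simpa [rconj_apply, h0] using h1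
    have hfc : rconj f = f := by
      rw [rconj_add, rconj_single, hsm] at hS
      exact add_left_cancel hS
    rw [add_mul, mul_add, ih hfc, key m a hsm]

/-- Every completely prime right ideal is quasi prime. -/
theorem stmt9 {n : ℕ} (I : RIdeal n) (h : CompletelyPrime I) : QuasiPrime I := by
  intro P Q hPQ
  have hmem : (P * Q) * rconj Q ∈ I := by
    have := I.smul_mem (MulOpposite.op (rconj Q)) hPQ
    simpa [MulOpposite.smul_eq_mul_unop] using this
  have hcomm : ∀ R : SP n, symzn Q * R = R * symzn Q :=
    fun R => comm_of_selfconj _ R (rconj_symzn Q)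
  have h1 : symzn Q * P ∈ I := by
    rw [hcomm P, symzn, ← mul_assoc]
    exact hmem
  have h2 : ∀ R ∈ I, symzn Q * R ∈ I := by
    intro R hR
    rw [hcomm R]
    have := I.smul_mem (MulOpposite.op (symzn Q)) hR
    simpa [MulOpposite.smul_eq_mul_unop] using this
  exact (h _ _ h1 h2).symm

end
end

section
/- Let I be a radical right ideal of ℍ[q₁,…,qₙ] such that V_c(I) is irreducible. Then I is a quasi prime right ideal. -/
open scoped Quaternion

noncomputable section

namespace Aux10

def mono {n : ℕ} (p : Fin n → ℍq) (m : Fin n →₀ ℕ) : ℍq :=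
  (List.ofFn fun i => p i ^ m i).prod

lemma list_prod_mul {n : ℕ} (f g : Fin n → ℍq) (h : ∀ i j, Commute (f i) (g j)) :
    (List.ofFn fun i => f i * g i).prod = (List.ofFn f).prod * (List.ofFn g).prod := by
  induction n with
  | zero => simp
  | succ m ih =>
    rw [List.ofFn_succ, List.ofFn_succ (f := f), List.ofFn_succ (f := g)]
    simp only [List.prod_cons]
    rw [ih (fun i => f i.succ) (fun i => g i.succ) (fun i j => h i.succ j.succ)]
    have hc : Commute (g 0) (List.ofFn fun i : Fin m => f i.succ).prod := by
      apply Commute.list_prod_right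
      intro y hy
      simp only [List.mem_ofFn] at hy
      obtain ⟨i, rfl⟩ := hy
      exact (h i.succ 0).symm
    rw [mul_assoc (f 0), ← mul_assoc (g 0), hc.eq, mul_assoc, mul_assoc (f 0)]

lemma mono_add {n : ℕ} {p : Fin n → ℍq} (hp : ∀ i j, Commute (p i) (p j))
    (k l : Fin n →₀ ℕ) : mono p (k + l) = mono p k * mono p l := by
  unfold mono
  rw [← list_prod_mul _ _ (fun i j => (hp i j).pow_pow _ _)]
  congr 1
  simp only [Finsupp.coe_add, Pi.add_apply, pow_add]

lemma mono_add' {n : ℕ} {p : Fin n → ℍq} (hp : ∀ i j, Commute (p i) (p j))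
    (k l : Fin n →₀ ℕ) : mono p (k + l) = mono p l * mono p k := by
  rw [add_comm, mono_add hp]

lemma peval_def {n : ℕ} (p : Fin n → ℍq) (P : SP n) :
    peval p P = ∑ m ∈ P.coeff.support, mono p m * P.coeff m := rfl

def pevalHom {n : ℕ} (p : Fin n → ℍq) : SP n →+ ℍq where
  toFun := peval p
  map_zero' := by simp [peval]
  map_add' P Q := by unfold peval; rw [AddMonoidAlgebra.coeff_add]; exact Finsupp.sum_add_index (by simp) (by intros; simp [mul_add])

lemma peval_single {n : ℕ} (p : Fin n → ℍq) (m : Fin n →₀ ℕ) (a : ℍq) :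
    peval p (AddMonoidAlgebra.single m a) = mono p m * a := by
  unfold peval
  rw [AddMonoidAlgebra.coeff_single, Finsupp.sum_single_index (by simp)]
  rfl

lemma peval_mul {n : ℕ} (p : Fin n → ℍq) (P R : SP n) :
    peval p (P * R) = ∑ k ∈ P.coeff.support, ∑ l ∈ R.coeff.support, mono p (k + l) * (P.coeff k * R.coeff l) := by
  rw [AddMonoidAlgebra.mul_def]
  rw [show (Finsupp.sum P.coeff fun k a => Finsupp.sum R.coeff fun l b =>
      AddMonoidAlgebra.single (k + l) (a * b)) =
      ∑ k ∈ P.coeff.support, ∑ l ∈ R.coeff.support, AddMonoidAlgebra.single (k + l) (P.coeff k * R.coeff l) from rfl]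
  rw [show peval p = ⇑(pevalHom p) from rfl, map_sum]
  refine Finset.sum_congr rfl fun k _ => ?_
  rw [map_sum]
  exact Finset.sum_congr rfl fun l _ => peval_single p _ _

/-- Lemma A: zeros of a left factor kill all right multiples, at commuting points. -/
lemma lemA {n : ℕ} {p : Fin n → ℍq} (hp : ∀ i j, Commute (p i) (p j)) {P : SP n}
    (h : peval p P = 0) (R : SP n) : peval p (P * R) = 0 := by
  rw [peval_mul, Finset.sum_comm]
  have : ∀ l ∈ R.coeff.support, ∑ k ∈ P.coeff.support, mono p (k + l) * (P.coeff k * R.coeff l)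
      = mono p l * (∑ k ∈ P.coeff.support, mono p k * P.coeff k) * R.coeff l := by
    intro l _
    rw [Finset.mul_sum, Finset.sum_mul]
    refine Finset.sum_congr rfl fun k _ => ?_
    rw [mono_add' hp, mul_assoc, mul_assoc, mul_assoc]
  rw [Finset.sum_congr rfl this, ← peval_def, h]
  simp

lemma central_shuffle (x y z : ℍq) (r : ℝ) :
    (x * y) * (z * (r : ℍq)) = (x * (r : ℍq)) * (y * z) := by
  have h2 : ∀ a : ℍq, (r : ℍq) * a = a * (r : ℍq) := Quaternion.coe_commutes r
  calc (x * y) * (z * (r : ℍq)) = (x * y) * ((r : ℍq) * z) := by rw [h2 z]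
    _ = (x * (y * (r : ℍq))) * z := by noncomm_ring
    _ = (x * ((r : ℍq) * y)) * z := by rw [h2 y]
    _ = (x * (r : ℍq)) * (y * z) := by noncomm_ring

/-- Lemma B: evaluation of a product with a real-coefficient right factor. -/
lemma lemB {n : ℕ} {p : Fin n → ℍq} (hp : ∀ i j, Commute (p i) (p j)) (P : SP n) {S : SP n}
    (hS : RealCoeffs S) : peval p (P * S) = peval p S * peval p P := by
  rw [peval_mul]
  have : ∀ k ∈ P.coeff.support, ∀ l ∈ S.coeff.support,
      mono p (k + l) * (P.coeff k * S.coeff l) = (mono p l * S.coeff l) * (mono p k * P.coeff k) := by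
    intro k _ l _
    obtain ⟨r, hr⟩ := hS l
    rw [hr, mono_add' hp]
    exact central_shuffle _ _ _ _
  calc ∑ k ∈ P.coeff.support, ∑ l ∈ S.coeff.support, mono p (k + l) * (P.coeff k * S.coeff l)
      = ∑ k ∈ P.coeff.support, ∑ l ∈ S.coeff.support, (mono p l * S.coeff l) * (mono p k * P.coeff k) := by
        refine Finset.sum_congr rfl fun k hk => Finset.sum_congr rfl fun l hl => this k hk l hl
    _ = ∑ l ∈ S.coeff.support, ∑ k ∈ P.coeff.support, (mono p l * S.coeff l) * (mono p k * P.coeff k) :=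
        Finset.sum_comm
    _ = (∑ l ∈ S.coeff.support, mono p l * S.coeff l) * (∑ k ∈ P.coeff.support, mono p k * P.coeff k) := by
        rw [Finset.sum_mul_sum]
    _ = peval p S * peval p P := by rw [peval_def, peval_def]

lemma real_of_star {q : ℍq} (h : star q = q) : ∃ r : ℝ, q = (r : ℍq) := by
  refine ⟨q.re, ?_⟩
  ext <;> simp [Quaternion.ext_iff] at h ⊢ <;> linarith [h]

lemma rconj_support {n : ℕ} (Q : SP n) : (rconj Q).coeff.support = Q.coeff.support := by
  ext m
  simp [rconj, Finsupp.mapRange_apply, Finsupp.mem_support_iff, star_eq_zero]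

/-- The symmetrization has real coefficients. -/
lemma symzn_real {n : ℕ} (Q : SP n) : RealCoeffs (symzn Q) := by
  intro m
  apply real_of_star
  rw [show (symzn Q).coeff m = (Q * rconj Q).coeff m from rfl, AddMonoidAlgebra.coeff_mul]
  rw [show (Finsupp.sum Q.coeff fun k a => Finsupp.sum (rconj Q).coeff fun l b =>
        if k + l = m then a * b else 0) =
      ∑ k ∈ Q.coeff.support, ∑ l ∈ (rconj Q).coeff.support, if k + l = m then Q.coeff k * (rconj Q).coeff l else 0
      from rfl]
  rw [star_sum]
  simp only [star_sum]
  rw [rconj_support]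
  rw [Finset.sum_comm]
  refine Finset.sum_congr rfl fun l _ => Finset.sum_congr rfl fun k _ => ?_
  have : (rconj Q).coeff l = star (Q.coeff l) := rfl
  have h2 : (rconj Q).coeff k = star (Q.coeff k) := rfl
  by_cases h : k + l = m
  · rw [if_pos h, if_pos (by rwa [add_comm])]
    rw [this, h2, star_mul, star_star]
  · rw [if_neg h, if_neg (by rwa [add_comm]), star_zero]

/-- Real-coefficient polynomials are central. -/
lemma real_central {n : ℕ} {S : SP n} (hS : RealCoeffs S) (R : SP n) : S * R = R * S := by
  have h1 : ∀ (m : Fin n →₀ ℕ) (r : ℝ) (R : SP n),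
      AddMonoidAlgebra.single m (r : ℍq) * R = R * AddMonoidAlgebra.single m (r : ℍq) := by
    intro m r R
    induction R using AddMonoidAlgebra.induction with
    | zero => simp
    | single_add a b f _ _ ih =>
      have hs : (AddMonoidAlgebra.single a b : SP n) = AddMonoidAlgebra.single a b := rfl
      rw [hs, mul_add, add_mul, ih]
      congr 1
      rw [AddMonoidAlgebra.single_mul_single, AddMonoidAlgebra.single_mul_single,
        add_comm, Quaternion.coe_commutes]
  conv_lhs => rw [← AddMonoidAlgebra.sum_coeff_single S]
  conv_rhs => rw [← AddMonoidAlgebra.sum_coeff_single S]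
  rw [show (Finsupp.sum S.coeff AddMonoidAlgebra.single)
      = ∑ m ∈ S.coeff.support, AddMonoidAlgebra.single m (S.coeff m) from rfl,
    Finset.sum_mul, Finset.mul_sum]
  refine Finset.sum_congr rfl fun m _ => ?_
  obtain ⟨r, hr⟩ := hS m
  rw [hr]
  exact h1 m r R

lemma commSlice_commute {n : ℕ} {p : Fin n → ℍq} (hp : p ∈ commSlice n) :
    ∀ i j, Commute (p i) (p j) := by
  obtain ⟨K, _, h⟩ := hp
  intro i j
  obtain ⟨x, y, hi⟩ := h i
  obtain ⟨x', y', hj⟩ := h j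
  rw [hi, hj]
  have c1 : ∀ (r : ℝ) (a : ℍq), Commute (r : ℍq) a := fun r a => Quaternion.coe_commutes r a
  have cyK : Commute ((y : ℍq) * K) ((x' : ℍq) + (y' : ℍq) * K) := by
    refine Commute.add_right ((c1 x' _).symm) ?_
    exact Commute.mul_left (c1 y _) (Commute.mul_right (c1 y' K).symm (Commute.refl K))
  exact Commute.add_left (c1 x _) cyK

end Aux10

open Aux10 in
/-- If `I` is radical and `V_c(I)` is irreducible, then `I` is quasi prime. -/
theorem stmt10 {n : ℕ} (I : RIdeal n) (hrad : radq I = I) (hirr : ¬ VcReducible I) :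
    QuasiPrime I := by
  intro P Q hPQ
  by_contra hcon
  push_neg at hcon
  obtain ⟨hP, hS⟩ := hcon
  set S := symzn Q with hSdef
  have hSreal : RealCoeffs S := symzn_real Q
  have hPS : P * S ∈ I := by
    have h1 : P * S = (MulOpposite.op (rconj Q)) • (P * Q) := by
      show P * S = (P * Q) * rconj Q
      rw [hSdef]
      exact (mul_assoc P Q (rconj Q)).symm
    rw [h1]
    exact Submodule.smul_mem I _ hPQ
  have hmem : ∀ x : SP n, x ∉ I → ∃ J : RIdeal n, CompletelyPrime J ∧ I ≤ J ∧ x ∉ J := by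
    intro x hx
    by_contra hc
    push_neg at hc
    apply hx
    rw [← hrad]
    exact Submodule.mem_sInf.mpr fun J hJ => hc J hJ.1 hJ.2
  obtain ⟨JA, hJAcp, hIJA, hSJA⟩ := hmem S hS
  obtain ⟨JB, hJBcp, hIJB, hPJB⟩ := hmem P hP
  have key : ∀ J : RIdeal n, CompletelyPrime J → I ≤ J → S ∈ J ∨ P ∈ J := by
    intro J hcp hIJ
    apply hcp S P
    · rw [real_central hSreal P]
      exact hIJ hPS
    · intro R hR
      rw [real_central hSreal R]
      exact Submodule.smul_mem J (MulOpposite.op S) hR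
  have hPJA : P ∈ JA := (key JA hJAcp hIJA).resolve_left hSJA
  have hSJB : S ∈ JB := (key JB hJBcp hIJB).resolve_right hPJB
  set I₁ : RIdeal n := I ⊔ Submodule.span (SP n)ᵐᵒᵖ {P} with hI₁def
  set I₂ : RIdeal n := I ⊔ Submodule.span (SP n)ᵐᵒᵖ {S} with hI₂def
  have hPmem : P ∈ I₁ := Submodule.mem_sup_right (Submodule.subset_span (Set.mem_singleton P))
  have hSmem : S ∈ I₂ := Submodule.mem_sup_right (Submodule.subset_span (Set.mem_singleton S))
  have hI1le : I₁ ≤ JA :=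
    sup_le hIJA (Submodule.span_le.mpr (Set.singleton_subset_iff.mpr hPJA))
  have hI2le : I₂ ≤ JB :=
    sup_le hIJB (Submodule.span_le.mpr (Set.singleton_subset_iff.mpr hSJB))
  -- a generic lemma: if peval p G = 0 and p ∈ Vc I then p ∈ Vc (I ⊔ span {G})
  have hVcmem : ∀ (G : SP n) (p : Fin n → ℍq), p ∈ Vc I → peval p G = 0 →
      p ∈ Vc (I ⊔ Submodule.span (SP n)ᵐᵒᵖ {G}) := by
    intro G p hp hG
    obtain ⟨hVq, hcs⟩ := hp
    have hcomm := commSlice_commute hcs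
    refine ⟨?_, hcs⟩
    intro x hx
    rw [Submodule.mem_sup] at hx
    obtain ⟨a, ha, b, hb, rfl⟩ := hx
    rw [Submodule.mem_span_singleton] at hb
    obtain ⟨r, rfl⟩ := hb
    rw [show peval p (a + r • G) = peval p a + peval p (r • G) from
      map_add (pevalHom p) a (r • G)]
    rw [hVq a ha, show (r • G : SP n) = G * r.unop from rfl, lemA hcomm hG r.unop, add_zero]
  apply hirr
  refine ⟨I₁, I₂, ?_, ?_, ?_, ?_, ?_, ?_, ?_⟩
  · intro h
    rw [h, Submodule.mem_bot] at hPmem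
    exact hP (hPmem ▸ I.zero_mem)
  · intro h
    exact hSJA (hI1le (h ▸ Submodule.mem_top))
  · intro h
    rw [h, Submodule.mem_bot] at hSmem
    exact hS (hSmem ▸ I.zero_mem)
  · intro h
    exact hPJB (hI2le (h ▸ Submodule.mem_top))
  · intro h
    exact hPJB (hI2le (h hPmem))
  · intro h
    exact hSJA (hI1le (h hSmem))
  · apply Set.Subset.antisymm
    · intro p hp
      have hcomm := commSlice_commute hp.2
      have h0 : peval p S * peval p P = 0 := by
        rw [← lemB hcomm P hSreal]
        exact hp.1 _ hPS
      rcases mul_eq_zero.mp h0 with h | h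
      · exact Or.inr (hVcmem S p hp h)
      · exact Or.inl (hVcmem P p hp h)
    · refine Set.union_subset ?_ ?_ <;>
        exact fun p hp => ⟨fun x hx => hp.1 x (Submodule.mem_sup_left hx), hp.2⟩


end
end
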